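/- Let Σ☆ ∈ ℝ², let τ☆ⁱ, ν☆ⁱ ∈ ℝ² (i = 1,2,3) be pairs of orthonormal vectors (ν☆ⁱ the 90° anticlockwise rotation of τ☆ⁱ), with angles θⁱ ∈ (0,π) between consecutive normals summing to 2π, and let α̃ⁱ > 0 satisfy sin θⁱ/α̃ⁱ all equal. Given points P¹, P², P³ ∈ ℝ² with Pⁱ − Σ☆ = Nⁱν☆ⁱ + Tⁱτ☆ⁱ, the condition P¹ = P² = P³ is equivalent to: (a) Σᵢ α̃ⁱNⁱ = 0, and (b) (T¹,T²,T³)ᵀ = 𝓘(N¹,N²,N³)ᵀ where 𝓘 has rows (0, c²/s¹, −c³/s¹), (−c¹/s², 0, c³/s²), (c¹/s³, −c²/s³, 0) with sⁱ = sin θⁱ, cⁱ = cos θⁱ. -/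

import Mathlib

noncomputable section

abbrev E2 := EuclideanSpace ℝ (Fin 2)

/-- Anticlockwise rotation by 90 degrees in ℝ². -/
def rot90 (v : E2) : E2 :=
  (WithLp.equiv 2 (Fin 2 → ℝ)).symm ![-(v 1), v 0]

/-- Anticlockwise rotation by angle θ in ℝ². -/
def rotAngle (θ : ℝ) (v : E2) : E2 :=
  (WithLp.equiv 2 (Fin 2 → ℝ)).symm
    ![Real.cos θ * v 0 - Real.sin θ * v 1, Real.sin θ * v 0 + Real.cos θ * v 1]

theorem stmt8 (θ1 θ2 θ3 : ℝ)
    (hθ1 : θ1 ∈ Set.Ioo 0 Real.pi) (hθ2 : θ2 ∈ Set.Ioo 0 Real.pi)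
    (hθ3 : θ3 ∈ Set.Ioo 0 Real.pi) (hsum : θ1 + θ2 + θ3 = 2 * Real.pi)
    (τ1 τ2 τ3 : E2) (hτ1 : ‖τ1‖ = 1) (hτ2 : ‖τ2‖ = 1) (hτ3 : ‖τ3‖ = 1)
    (ν1 ν2 ν3 : E2) (hν1 : ν1 = rot90 τ1) (hν2 : ν2 = rot90 τ2) (hν3 : ν3 = rot90 τ3)
    (h12 : ν2 = rotAngle θ3 ν1) (h23 : ν3 = rotAngle θ1 ν2) (h31 : ν1 = rotAngle θ2 ν3)
    (α1 α2 α3 : ℝ) (hα1 : 0 < α1) (hα2 : 0 < α2) (hα3 : 0 < α3)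
    (hyoung : Real.sin θ1 / α1 = Real.sin θ2 / α2 ∧
      Real.sin θ2 / α2 = Real.sin θ3 / α3)
    (Sj P1 P2 P3 : E2) (N1 N2 N3 T1 T2 T3 : ℝ)
    (hP1 : P1 - Sj = N1 • ν1 + T1 • τ1)
    (hP2 : P2 - Sj = N2 • ν2 + T2 • τ2)
    (hP3 : P3 - Sj = N3 • ν3 + T3 • τ3) :
    (P1 = P2 ∧ P2 = P3) ↔
      (α1 * N1 + α2 * N2 + α3 * N3 = 0 ∧
        T1 = Real.cos θ2 / Real.sin θ1 * N2 - Real.cos θ3 / Real.sin θ1 * N3 ∧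
        T2 = -(Real.cos θ1 / Real.sin θ2) * N1 + Real.cos θ3 / Real.sin θ2 * N3 ∧
        T3 = Real.cos θ1 / Real.sin θ3 * N1 - Real.cos θ2 / Real.sin θ3 * N2) := by
  set s1 := Real.sin θ1 with hs1def
  set s2 := Real.sin θ2 with hs2def
  set s3 := Real.sin θ3 with hs3def
  set c1 := Real.cos θ1 with hc1def
  set c2 := Real.cos θ2 with hc2def
  set c3 := Real.cos θ3 with hc3def
  have s1pos : 0 < s1 := Real.sin_pos_of_pos_of_lt_pi hθ1.1 hθ1.2
  have s2pos : 0 < s2 := Real.sin_pos_of_pos_of_lt_pi hθ2.1 hθ2.2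
  have s3pos : 0 < s3 := Real.sin_pos_of_pos_of_lt_pi hθ3.1 hθ3.2
  have pyth1 : s1^2 + c1^2 = 1 := Real.sin_sq_add_cos_sq θ1
  have pyth2 : s2^2 + c2^2 = 1 := Real.sin_sq_add_cos_sq θ2
  have pyth3 : s3^2 + c3^2 = 1 := Real.sin_sq_add_cos_sq θ3
  have e1 : θ1 = 2 * Real.pi - (θ2 + θ3) := by linarith
  have e2 : θ2 = 2 * Real.pi - (θ1 + θ3) := by linarith
  have e3 : θ3 = 2 * Real.pi - (θ1 + θ2) := by linarith
  have id_s1 : s1 = -(s2 * c3 + c2 * s3) := by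
    rw [hs1def, e1, Real.sin_sub, Real.sin_two_pi, Real.cos_two_pi, Real.sin_add, Real.cos_add]
    ring
  have id_c1 : c1 = c2 * c3 - s2 * s3 := by
    rw [hc1def, e1, Real.cos_sub, Real.sin_two_pi, Real.cos_two_pi, Real.sin_add, Real.cos_add]
    ring
  have id_s2 : s2 = -(s1 * c3 + c1 * s3) := by
    rw [hs2def, e2, Real.sin_sub, Real.sin_two_pi, Real.cos_two_pi, Real.sin_add, Real.cos_add]
    ring
  have id_c2 : c2 = c1 * c3 - s1 * s3 := by
    rw [hc2def, e2, Real.cos_sub, Real.sin_two_pi, Real.cos_two_pi, Real.sin_add, Real.cos_add]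
    ring
  have id_s3 : s3 = -(s1 * c2 + c1 * s2) := by
    rw [hs3def, e3, Real.sin_sub, Real.sin_two_pi, Real.cos_two_pi, Real.sin_add, Real.cos_add]
    ring
  have id_c3 : c3 = c1 * c2 - s1 * s2 := by
    rw [hc3def, e3, Real.cos_sub, Real.sin_two_pi, Real.cos_two_pi, Real.sin_add, Real.cos_add]
    ring
  -- Young ratios
  have hr12 : s1 * α2 = s2 * α1 := by
    have h := hyoung.1
    field_simp at h
    linarith
  have hr23 : s2 * α3 = s3 * α2 := by
    have h := hyoung.2
    field_simp at h
    linarith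
  have hr13 : s1 * α3 = s3 * α1 := by
    have h : α2 * (s1 * α3) = α2 * (s3 * α1) := by linear_combination α3 * hr12 + α1 * hr23
    exact mul_left_cancel₀ (ne_of_gt hα2) h
  -- coordinates
  set a := τ1 0 with hadef
  set b := τ1 1 with hbdef
  have hab : a^2 + b^2 = 1 := by
    have h := hτ1
    rw [EuclideanSpace.norm_eq, Fin.sum_univ_two] at h
    have := Real.sqrt_eq_one.mp h
    simpa [sq_abs] using this
  have hn10 : ν1 0 = -b := by rw [hν1]; simp [rot90, hbdef]
  have hn11 : ν1 1 = a := by rw [hν1]; simp [rot90, hadef]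
  have hn20 : ν2 0 = c3 * (-b) - s3 * a := by rw [h12]; simp [rotAngle, hn10, hn11, hc3def, hs3def]
  have hn21 : ν2 1 = s3 * (-b) + c3 * a := by rw [h12]; simp [rotAngle, hn10, hn11, hc3def, hs3def]
  have ht20 : τ2 0 = ν2 1 := by rw [hν2]; simp [rot90]
  have ht21 : τ2 1 = -(ν2 0) := by rw [hν2]; simp [rot90]
  have hn30 : ν3 0 = c1 * ν2 0 - s1 * ν2 1 := by rw [h23]; simp [rotAngle, hc1def, hs1def]
  have hn31 : ν3 1 = s1 * ν2 0 + c1 * ν2 1 := by rw [h23]; simp [rotAngle, hc1def, hs1def]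
  have ht30 : τ3 0 = ν3 1 := by
    have : ν3 1 = τ3 0 := by rw [hν3]; simp [rot90]
    linarith
  have ht31 : τ3 1 = -(ν3 0) := by
    have : ν3 0 = -(τ3 1) := by rw [hν3]; simp [rot90]
    linarith
  -- component equations for P's
  have hP10 : P1 0 - Sj 0 = N1 * ν1 0 + T1 * τ1 0 := by simpa using congrArg (fun v : E2 => v 0) hP1
  have hP11 : P1 1 - Sj 1 = N1 * ν1 1 + T1 * τ1 1 := by simpa using congrArg (fun v : E2 => v 1) hP1
  have hP20 : P2 0 - Sj 0 = N2 * ν2 0 + T2 * τ2 0 := by simpa using congrArg (fun v : E2 => v 0) hP2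
  have hP21 : P2 1 - Sj 1 = N2 * ν2 1 + T2 * τ2 1 := by simpa using congrArg (fun v : E2 => v 1) hP2
  have hP30 : P3 0 - Sj 0 = N3 * ν3 0 + T3 * τ3 0 := by simpa using congrArg (fun v : E2 => v 0) hP3
  have hP31 : P3 1 - Sj 1 = N3 * ν3 1 + T3 * τ3 1 := by simpa using congrArg (fun v : E2 => v 1) hP3
  have s1ne : s1 ≠ 0 := ne_of_gt s1pos
  have s2ne : s2 ≠ 0 := ne_of_gt s2pos
  have s3ne : s3 ≠ 0 := ne_of_gt s3pos
  have Hn20 : ν2 0 = -(c3*b) - s3*a := by rw [hn20]; ring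
  have Hn21 : ν2 1 = -(s3*b) + c3*a := by rw [hn21]; ring
  have Ht20 : τ2 0 = -(s3*b) + c3*a := by rw [ht20, Hn21]
  have Ht21 : τ2 1 = c3*b + s3*a := by rw [ht21, Hn20]; ring
  have Hn30 : ν3 0 = -(c2*b) + s2*a := by rw [hn30, Hn20, Hn21, id_c2, id_s2]; ring
  have Hn31 : ν3 1 = s2*b + c2*a := by rw [hn31, Hn20, Hn21, id_c2, id_s2]; ring
  have Ht30 : τ3 0 = s2*b + c2*a := by rw [ht30, Hn31]
  have Ht31 : τ3 1 = c2*b - s2*a := by rw [ht31, Hn30]; ring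
  have q10 : P1 0 - Sj 0 = N1*(-b) + T1*a := by rw [hP10, hn10, ← hadef]
  have q11 : P1 1 - Sj 1 = N1*a + T1*b := by rw [hP11, hn11, ← hbdef]
  have q20 : P2 0 - Sj 0 = N2*(-(c3*b) - s3*a) + T2*(-(s3*b) + c3*a) := by
    rw [hP20, Hn20, Ht20]
  have q21 : P2 1 - Sj 1 = N2*(-(s3*b) + c3*a) + T2*(c3*b + s3*a) := by
    rw [hP21, Hn21, Ht21]
  have q30 : P3 0 - Sj 0 = N3*(-(c2*b) + s2*a) + T3*(s2*b + c2*a) := by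
    rw [hP30, Hn30, Ht30]
  have q31 : P3 1 - Sj 1 = N3*(s2*b + c2*a) + T3*(c2*b - s2*a) := by
    rw [hP31, Hn31, Ht31]
  have k12 : P1 = P2 ↔ (N1 = c3*N2 + s3*T2 ∧ T1 = -(s3*N2) + c3*T2) := by
    constructor
    · intro h
      have h0 : N1*(-b) + T1*a = N2*(-(c3*b) - s3*a) + T2*(-(s3*b) + c3*a) := by
        rw [← q10, ← q20, h]
      have h1 : N1*a + T1*b = N2*(-(s3*b) + c3*a) + T2*(c3*b + s3*a) := by
        rw [← q11, ← q21, h]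
      exact ⟨by linear_combination (-b)*h0 + a*h1 + (-(N1 - c3*N2 - s3*T2))*hab,
             by linear_combination a*h0 + b*h1 + (-(T1 + s3*N2 - c3*T2))*hab⟩
    · rintro ⟨hA, hB⟩
      have h0 : P1 0 - Sj 0 = P2 0 - Sj 0 := by
        rw [q10, q20]; linear_combination (-b)*hA + a*hB
      have h1 : P1 1 - Sj 1 = P2 1 - Sj 1 := by
        rw [q11, q21]; linear_combination a*hA + b*hB
      have hs : P1 - Sj = P2 - Sj := by
        ext i; fin_cases i
        · exact h0
        · exact h1
      exact sub_left_inj.mp hs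
  have k23 : P2 = P3 ↔
      (c3*N2 + s3*T2 = c2*N3 - s2*T3 ∧ -(s3*N2) + c3*T2 = s2*N3 + c2*T3) := by
    constructor
    · intro h
      have h0 : N2*(-(c3*b) - s3*a) + T2*(-(s3*b) + c3*a)
          = N3*(-(c2*b) + s2*a) + T3*(s2*b + c2*a) := by
        rw [← q20, ← q30, h]
      have h1 : N2*(-(s3*b) + c3*a) + T2*(c3*b + s3*a)
          = N3*(s2*b + c2*a) + T3*(c2*b - s2*a) := by
        rw [← q21, ← q31, h]
      exact ⟨by linear_combination (-b)*h0 + a*h1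
                  + (-(c3*N2 + s3*T2 - c2*N3 + s2*T3))*hab,
             by linear_combination a*h0 + b*h1
                  + (-(-(s3*N2) + c3*T2 - s2*N3 - c2*T3))*hab⟩
    · rintro ⟨hC, hD⟩
      have h0 : P2 0 - Sj 0 = P3 0 - Sj 0 := by
        rw [q20, q30]; linear_combination (-b)*hC + a*hD
      have h1 : P2 1 - Sj 1 = P3 1 - Sj 1 := by
        rw [q21, q31]; linear_combination a*hC + b*hD
      have hs : P2 - Sj = P3 - Sj := by
        ext i; fin_cases i
        · exact h0
        · exact h1
      exact sub_left_inj.mp hs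
  rw [k12, k23]
  constructor
  · rintro ⟨⟨hA, hB⟩, hC, hD⟩
    have g3 : N3 = c1*N2 - s1*T2 := by
      linear_combination (-c2)*hC + (-s2)*hD + (-N2)*id_c1 + T2*id_s1 + (-N3)*pyth2
    have g4 : T3 = s1*N2 + c1*T2 := by
      linear_combination s2*hC + (-c2)*hD + (-N2)*id_s1 + (-T2)*id_c1 + (-T3)*pyth2
    have sumS : s1*N1 + s2*N2 + s3*N3 = 0 := by
      linear_combination s1*hA + s3*g3 + N2*id_s2
    have tT1 : s1*T1 = c2*N2 - c3*N3 := by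
      linear_combination s1*hB + c3*g3 + (-N2)*id_c2
    have tT2 : s2*T2 = -(c1*N1) + c3*N3 := by
      linear_combination c1*hA + (-c3)*g3 + T2*id_s2
    have tT3 : s3*T3 = c1*N1 - c2*N2 := by
      linear_combination (-c1)*hA + s3*g4 + N2*id_c2
    refine ⟨?_, ?_, ?_, ?_⟩
    · have h : s1*(α1*N1 + α2*N2 + α3*N3) = α1*(s1*N1 + s2*N2 + s3*N3) := by
        linear_combination N2*hr12 + N3*hr13
      rw [sumS, mul_zero] at h
      exact (mul_eq_zero.mp h).resolve_left s1ne
    · field_simp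
      linear_combination tT1
    · field_simp
      linear_combination tT2
    · field_simp
      linear_combination tT3
  · rintro ⟨hα, hT1, hT2, hT3⟩
    have tT1 : s1*T1 = c2*N2 - c3*N3 := by
      field_simp at hT1; linear_combination hT1
    have tT2 : s2*T2 = -(c1*N1) + c3*N3 := by
      have h : s2*(s2*T2) = s2*(-(c1*N1) + c3*N3) := by
        field_simp at hT2; linear_combination s2*hT2
      exact mul_left_cancel₀ s2ne h
    have tT3 : s3*T3 = c1*N1 - c2*N2 := by
      field_simp at hT3; linear_combination hT3
    have sumS : s1*N1 + s2*N2 + s3*N3 = 0 := by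
      have h : α1*(s1*N1 + s2*N2 + s3*N3) = s1*(α1*N1 + α2*N2 + α3*N3) := by
        linear_combination (-N2)*hr12 + (-N3)*hr13
      rw [hα, mul_zero] at h
      exact (mul_eq_zero.mp h).resolve_left (ne_of_gt hα1)
    have g3 : N3 = c1*N2 - s1*T2 := by
      have h : s2*N3 = s2*(c1*N2 - s1*T2) := by
        linear_combination s1*tT2 + (-c1)*sumS + N3*id_s2
      exact mul_left_cancel₀ s2ne h
    have g4 : T3 = s1*N2 + c1*T2 := by
      have h : (s2*s3)*T3 = (s2*s3)*(s1*N2 + c1*T2) := by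
        linear_combination s2*tT3 + (-(c1*s3))*tT2 + (c1*N1)*id_s2
          + (-(c1*c3))*sumS + (-(s2*N2))*id_c2
      exact mul_left_cancel₀ (mul_ne_zero s2ne s3ne) h
    have hA : N1 = c3*N2 + s3*T2 := by
      have h : s2*N1 = s2*(c3*N2 + s3*T2) := by
        linear_combination (-s3)*tT2 + (-c3)*sumS + N1*id_s2
      exact mul_left_cancel₀ s2ne h
    have hB : T1 = -(s3*N2) + c3*T2 := by
      have h : (s1*s2)*T1 = (s1*s2)*(-(s3*N2) + c3*T2) := by
        linear_combination s2*tT1 + (-(c3*s1))*tT2 + (c1*c3)*sumS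
          + (s2*N2)*id_c2 + (-(c3*N3))*id_s2
      exact mul_left_cancel₀ (mul_ne_zero s1ne s2ne) h
    have hC : c3*N2 + s3*T2 = c2*N3 - s2*T3 := by
      linear_combination (-c2)*g3 + s2*g4 + N2*id_c3 + T2*id_s3
    have hD : -(s3*N2) + c3*T2 = s2*N3 + c2*T3 := by
      linear_combination (-s2)*g3 + (-c2)*g4 + (-N2)*id_s3 + T2*id_c3
    exact ⟨⟨hA, hB⟩, hC, hD⟩
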